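/- Let A be an n×n matrix over ℂ((1/z)). Then the following are equivalent: (i) every coefficient eᵢ(A) of the characteristic polynomial of A lies in (1/z)ℂ[[1/z]] (i.e., has strictly negative valuation); (ii) val(A^k) → −∞ as k → ∞; (iii) every eigenvalue of A in the algebraic closure of ℂ((1/z)) has strictly negative valuation. -/

import Mathlib

open Polynomial Matrix

set_option maxHeartbeats 1000000
set_option synthInstance.maxHeartbeats 400000

namespace NSVaux

/-- `VLS f M` : the coefficients of `f` vanish below `M`, i.e. `f ∈ T^M ℂ[[T]]`. -/
def VLS (f : LaurentSeries ℂ) (M : ℤ) : Prop := ∀ m < M, f.coeff m = 0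

lemma VLS.mono {f : LaurentSeries ℂ} {M M' : ℤ} (h : VLS f M) (h' : M' ≤ M) : VLS f M' :=
  fun m hm => h m (lt_of_lt_of_le hm h')

lemma VLS.zero (M : ℤ) : VLS 0 M := fun m _ => rfl

lemma VLS.add {f g : LaurentSeries ℂ} {M : ℤ} (hf : VLS f M) (hg : VLS g M) :
    VLS (f + g) M := fun m hm => by
  simp [HahnSeries.coeff_add, hf m hm, hg m hm]

lemma VLS.neg {f : LaurentSeries ℂ} {M : ℤ} (hf : VLS f M) : VLS (-f) M := fun m hm => by
  simp [HahnSeries.coeff_neg, hf m hm]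

lemma VLS.sum {ι : Type*} (s : Finset ι) (f : ι → LaurentSeries ℂ) {M : ℤ}
    (h : ∀ i ∈ s, VLS (f i) M) : VLS (∑ i ∈ s, f i) M := by
  classical
  induction s using Finset.induction_on with
  | empty => simpa using VLS.zero M
  | @insert a s' hx ih =>
    rw [Finset.sum_insert hx]
    exact (h a (by simp)).add (ih fun i hi => h i (by simp [hi]))

lemma VLS.mul {f g : LaurentSeries ℂ} {M M' : ℤ} (hf : VLS f M) (hg : VLS g M') :
    VLS (f * g) (M + M') := by
  intro m hm
  rw [HahnSeries.coeff_mul]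
  apply Finset.sum_eq_zero
  rintro ⟨a, b⟩ hab
  rw [Finset.mem_addAntidiagonal] at hab
  obtain ⟨-, -, habm⟩ := hab
  by_cases ha : a < M
  · simp [hf a ha]
  · have : b < M' := by omega
    simp [hg b this]

lemma VLS.exists (f : LaurentSeries ℂ) : ∃ M, VLS f M := by
  by_cases hf : f = 0
  · exact ⟨0, hf ▸ VLS.zero 0⟩
  · exact ⟨f.order, fun m hm => HahnSeries.coeff_eq_zero_of_lt_order hm⟩


/-- `VM B M` : every entry of `B` lies in `T^M ℂ[[T]]`. -/
def VM {n : ℕ} (B : Matrix (Fin n) (Fin n) (LaurentSeries ℂ)) (M : ℤ) : Prop :=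
  ∀ p q, VLS (B p q) M

lemma VM.mono {n : ℕ} {B : Matrix (Fin n) (Fin n) (LaurentSeries ℂ)} {M M' : ℤ}
    (h : VM B M) (h' : M' ≤ M) : VM B M' := fun p q => (h p q).mono h'

lemma VM.exists {n : ℕ} (B : Matrix (Fin n) (Fin n) (LaurentSeries ℂ)) : ∃ M, VM B M := by
  classical
  choose g hg using fun p : Fin n × Fin n => VLS.exists (B p.1 p.2)
  rcases isEmpty_or_nonempty (Fin n × Fin n) with h | h
  · exact ⟨0, fun p q => (h.false (p, q)).elim⟩
  · exact ⟨Finset.univ.inf' Finset.univ_nonempty g, fun p q =>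
      (hg (p, q)).mono (Finset.inf'_le _ (Finset.mem_univ _))⟩

/-- A common bound for finitely many matrices `A^r`, `r < n`. -/
lemma VM.exists_forall_lt {n : ℕ} (A : Matrix (Fin n) (Fin n) (LaurentSeries ℂ)) :
    ∃ N, ∀ r < n, VM (A ^ r) N := by
  classical
  choose g hg using fun r : ℕ => VM.exists (A ^ r)
  rcases Nat.eq_zero_or_pos n with hn | hn
  · exact ⟨0, fun r hr => by omega⟩
  · refine ⟨((Finset.range n).inf' (by simp [Finset.nonempty_range_iff]; omega) g), fun r hr => ?_⟩
    exact (hg r).mono (Finset.inf'_le _ (Finset.mem_range.mpr hr))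

/-- Cayley–Hamilton, in the form expressing `A^n` via lower powers. -/
lemma cayley {n : ℕ} (A : Matrix (Fin n) (Fin n) (LaurentSeries ℂ)) :
    A ^ n = ∑ i ∈ Finset.range n, (-(Matrix.charpoly A).coeff i) • A ^ i := by
  have hd : (Matrix.charpoly A).natDegree = n := by
    rw [Matrix.charpoly_natDegree_eq_dim, Fintype.card_fin]
  have hCH := Matrix.aeval_self_charpoly A
  rw [Polynomial.aeval_eq_sum_range, hd, Finset.sum_range_succ] at hCH
  have hcn : (Matrix.charpoly A).coeff n = 1 := by
    have := (Matrix.charpoly_monic A).coeff_natDegree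
    rwa [hd] at this
  rw [hcn, one_smul] at hCH
  have : A ^ n = -∑ i ∈ Finset.range n, (Matrix.charpoly A).coeff i • A ^ i := by
    rw [eq_neg_iff_add_eq_zero, add_comm]; exact hCH
  rw [this, ← Finset.sum_neg_distrib]
  congr 1; ext i : 1
  exact (neg_smul (A.charpoly.coeff i) (A ^ i)).symm


lemma step12 {n : ℕ} (A : Matrix (Fin n) (Fin n) (LaurentSeries ℂ))
    (h1 : ∀ i < n, ∀ m : ℤ, m ≤ 0 → ((Matrix.charpoly A).coeff i).coeff m = 0) :
    ∀ M : ℤ, ∃ k₀ : ℕ, ∀ k ≥ k₀, ∀ i j : Fin n, ∀ m : ℤ, m < M → ((A ^ k) i j).coeff m = 0 := by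
  intro M
  rcases Nat.eq_zero_or_pos n with hn | hn
  · subst hn; exact ⟨0, fun k _ i j => i.elim0⟩
  obtain ⟨N, hN⟩ := VM.exists_forall_lt A
  have hc : ∀ i < n, VLS ((Matrix.charpoly A).coeff i) 1 := fun i hi m hm => h1 i hi m (by omega)
  have claim : ∀ k, VM (A ^ k) (N + (k / n : ℕ)) := by
    intro k
    induction k using Nat.strong_induction_on with
    | _ k ih =>
      by_cases hk : k < n
      · rw [Nat.div_eq_of_lt hk]
        simpa using hN k hk
      · push_neg at hk
        have hkey : A ^ k
            = ∑ i ∈ Finset.range n, (-(Matrix.charpoly A).coeff i) • A ^ (k - n + i) := by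
          have h1' : A ^ k = A ^ n * A ^ (k - n) := by rw [← pow_add]; congr 1; omega
          rw [h1', cayley A, Finset.sum_mul]
          refine Finset.sum_congr rfl fun i hi => ?_
          have hsm : ∀ (c : LaurentSeries ℂ) (X Y : Matrix (Fin n) (Fin n) (LaurentSeries ℂ)),
              (c • X) * Y = c • (X * Y) := by
            intro c X Y
            ext p q
            simp [Matrix.mul_apply, Matrix.smul_apply, smul_eq_mul, Finset.mul_sum, mul_assoc]
          rw [hsm, ← pow_add]
          congr 2
          omega
        intro p q
        rw [hkey]
        have hentry : (∑ i ∈ Finset.range n,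
              (-(Matrix.charpoly A).coeff i) • A ^ (k - n + i)) p q
            = ∑ i ∈ Finset.range n,
              (-(Matrix.charpoly A).coeff i) * (A ^ (k - n + i)) p q := by
          rw [Matrix.sum_apply]
          exact Finset.sum_congr rfl fun i _ => rfl
        rw [hentry]
        apply VLS.sum
        intro i hi
        rw [Finset.mem_range] at hi
        have hih := ih (k - n + i) (by omega) p q
        have hmul := (hc i hi).neg.mul hih
        apply hmul.mono
        have e1 : (k - n) / n + 1 = k / n := by
          rw [← Nat.add_div_right _ hn]; congr 1; omega
        have e2 : (k - n) / n ≤ (k - n + i) / n := Nat.div_le_div_right (by omega)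
        push_cast at e1 e2 ⊢
        linarith
  refine ⟨n * (M - N).toNat, fun k hk i j m hm => ?_⟩
  have hdiv : (M - N).toNat ≤ k / n :=
    (Nat.le_div_iff_mul_le hn).mpr (by rw [Nat.mul_comm] at hk; exact hk)
  refine (claim k).mono (M' := M) ?_ i j m hm
  generalize hd : k / n = d at hdiv
  omega


section Val

abbrev Kbar := AlgebraicClosure (LaurentSeries ℂ)

variable {v : Kbar → WithBot ℚ}

lemma wb_add_lt_zero {a b : WithBot ℚ} (ha : a < 0) (hb : b ≤ 0) : a + b < 0 := by
  cases a with
  | bot => rw [WithBot.bot_add]; exact WithBot.bot_lt_coe 0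
  | coe qa =>
    cases b with
    | bot => rw [WithBot.add_bot]; exact WithBot.bot_lt_coe 0
    | coe qb =>
      rw [← WithBot.coe_add]
      have ha' : qa < 0 := by exact_mod_cast ha
      have hb' : qb ≤ 0 := by exact_mod_cast hb
      exact_mod_cast (by linarith : qa + qb < 0)

lemma wb_add_le_zero {a b : WithBot ℚ} (ha : a ≤ 0) (hb : b ≤ 0) : a + b ≤ 0 := by
  cases a with
  | bot => rw [WithBot.bot_add]; exact bot_le
  | coe qa =>
    cases b with
    | bot => rw [WithBot.add_bot]; exact bot_le
    | coe qb =>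
      rw [← WithBot.coe_add]
      have ha' : qa ≤ 0 := by exact_mod_cast ha
      have hb' : qb ≤ 0 := by exact_mod_cast hb
      exact_mod_cast (by linarith : qa + qb ≤ 0)

lemma wb_add_nonneg {a b : WithBot ℚ} (ha : 0 ≤ a) (hb : 0 ≤ b) : 0 ≤ a + b := by
  cases a with
  | bot => exact absurd ha (by simp)
  | coe qa =>
    cases b with
    | bot => exact absurd hb (by simp)
    | coe qb =>
      rw [← WithBot.coe_add]
      have ha' : 0 ≤ qa := by exact_mod_cast ha
      have hb' : 0 ≤ qb := by exact_mod_cast hb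
      exact_mod_cast (by linarith : (0:ℚ) ≤ qa + qb)

lemma wb_add_le {a b a' b' : WithBot ℚ} (ha : a ≤ a') (hb : b ≤ b') : a + b ≤ a' + b' :=
  add_le_add ha hb

lemma v_zero' (hv0 : ∀ x, v x = ⊥ ↔ x = 0) : v 0 = ⊥ := (hv0 0).mpr rfl

lemma v_one' (hv0 : ∀ x, v x = ⊥ ↔ x = 0) (hvmul : ∀ x y, v (x * y) = v x + v y) :
    v 1 = 0 := by
  have h := hvmul 1 1
  rw [one_mul] at h
  cases hq : v 1 with
  | bot => exact absurd ((hv0 1).mp hq) one_ne_zero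
  | coe q =>
    rw [hq, ← WithBot.coe_add] at h
    have h1 : q = q + q := by exact_mod_cast h
    have h2 : q = 0 := by linarith
    exact_mod_cast h2

lemma v_negone (hv0 : ∀ x, v x = ⊥ ↔ x = 0) (hvmul : ∀ x y, v (x * y) = v x + v y) :
    v (-1) = 0 := by
  have h := hvmul (-1) (-1)
  rw [neg_mul_neg, one_mul, v_one' hv0 hvmul] at h
  cases hq : v (-1) with
  | bot => exact absurd ((hv0 (-1)).mp hq) (by norm_num)
  | coe q =>
    rw [hq, ← WithBot.coe_add] at h
    have h' : (0:ℚ) = q + q := by exact_mod_cast h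
    have h2 : q = 0 := by linarith
    exact_mod_cast h2

lemma v_negone_pow (hv0 : ∀ x, v x = ⊥ ↔ x = 0) (hvmul : ∀ x y, v (x * y) = v x + v y)
    (j : ℕ) : v ((-1 : Kbar) ^ j) = 0 := by
  induction j with
  | zero => simpa using v_one' hv0 hvmul
  | succ j ih =>
    rw [pow_succ, hvmul, ih, v_negone hv0 hvmul]; simp

lemma v_sum_le {ι : Type*} (hv0 : ∀ x, v x = ⊥ ↔ x = 0)
    (hvadd : ∀ x y, v (x + y) ≤ max (v x) (v y)) (s : Finset ι) (f : ι → Kbar)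
    (c : WithBot ℚ) (h : ∀ i ∈ s, v (f i) ≤ c) : v (∑ i ∈ s, f i) ≤ c := by
  classical
  induction s using Finset.induction_on with
  | empty => simp [v_zero' hv0]
  | @insert a s' hx ih =>
    rw [Finset.sum_insert hx]
    refine le_trans (hvadd _ _) (max_le (h a (by simp)) (ih fun i hi => h i (by simp [hi])))

lemma v_msum_lt (hv0 : ∀ x, v x = ⊥ ↔ x = 0)
    (hvadd : ∀ x y, v (x + y) ≤ max (v x) (v y)) (s : Multiset Kbar)
    (h : ∀ x ∈ s, v x < 0) : v s.sum < 0 := by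
  induction s using Multiset.induction_on with
  | empty =>
    rw [Multiset.sum_zero, v_zero' hv0]
    exact_mod_cast WithBot.bot_lt_coe (0:ℚ)
  | cons a s' ih =>
    rw [Multiset.sum_cons]
    refine lt_of_le_of_lt (hvadd _ _) (max_lt (h a (by simp)) (ih fun x hx => h x (by simp [hx])))

lemma v_mprod_le (hv0 : ∀ x, v x = ⊥ ↔ x = 0) (hvmul : ∀ x y, v (x * y) = v x + v y)
    (s : Multiset Kbar) (h : ∀ x ∈ s, v x ≤ 0) : v s.prod ≤ 0 := by
  induction s using Multiset.induction_on with
  | empty => simp [Multiset.prod_zero, v_one' hv0 hvmul]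
  | cons a s' ih =>
    rw [Multiset.prod_cons, hvmul]
    exact wb_add_le_zero (h a (by simp)) (ih fun x hx => h x (by simp [hx]))

lemma v_mprod_lt (hv0 : ∀ x, v x = ⊥ ↔ x = 0) (hvmul : ∀ x y, v (x * y) = v x + v y)
    (s : Multiset Kbar) (hs : s ≠ 0) (h : ∀ x ∈ s, v x < 0) : v s.prod < 0 := by
  obtain ⟨a, ha⟩ := Multiset.exists_mem_of_ne_zero hs
  obtain ⟨s', rfl⟩ := Multiset.exists_cons_of_mem ha
  rw [Multiset.prod_cons, hvmul]
  exact wb_add_lt_zero (h a (by simp))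
    (v_mprod_le hv0 hvmul s' fun x hx => le_of_lt (h x (by simp [hx])))

lemma v_pow_nonneg (hv0 : ∀ x, v x = ⊥ ↔ x = 0) (hvmul : ∀ x y, v (x * y) = v x + v y)
    {x : Kbar} (hx : 0 ≤ v x) (k : ℕ) : 0 ≤ v (x ^ k) := by
  induction k with
  | zero => simp [v_one' hv0 hvmul]
  | succ k ih => rw [pow_succ, hvmul]; exact wb_add_nonneg ih hx


/-- transfer a coefficient-vanishing bound through the valuation on the closure -/
lemma v_phi_le (hv0 : ∀ x, v x = ⊥ ↔ x = 0)
    (hvext : ∀ f : LaurentSeries ℂ, f ≠ 0 →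
      v (algebraMap (LaurentSeries ℂ) Kbar f) = ((-(f.order) : ℚ) : WithBot ℚ))
    {f : LaurentSeries ℂ} {M : ℤ} (hf : VLS f M) :
    v (algebraMap (LaurentSeries ℂ) Kbar f) ≤ (((-M : ℤ) : ℚ) : WithBot ℚ) := by
  by_cases h0 : f = 0
  · rw [h0, map_zero, v_zero' hv0]; exact bot_le
  · rw [hvext f h0]
    have hord : M ≤ f.order := by
      by_contra hlt
      exact (HahnSeries.coeff_order_eq_zero.not.2 h0) (hf f.order (by omega))
    have : (-(f.order) : ℚ) ≤ ((-M : ℤ) : ℚ) := by push_cast; exact_mod_cast neg_le_neg (by exact_mod_cast hord)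
    exact_mod_cast this

end Val

lemma step23 {n : ℕ} (A : Matrix (Fin n) (Fin n) (LaurentSeries ℂ))
    {v : Kbar → WithBot ℚ}
    (hv0 : ∀ x, v x = ⊥ ↔ x = 0)
    (hvmul : ∀ x y, v (x * y) = v x + v y)
    (hvadd : ∀ x y, v (x + y) ≤ max (v x) (v y))
    (hvext : ∀ f : LaurentSeries ℂ, f ≠ 0 →
      v (algebraMap (LaurentSeries ℂ) Kbar f) = ((-(f.order) : ℚ) : WithBot ℚ))
    (h2 : ∀ M : ℤ, ∃ k₀ : ℕ, ∀ k ≥ k₀, ∀ i j : Fin n, ∀ m : ℤ, m < M →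
      ((A ^ k) i j).coeff m = 0) :
    ∀ lam : Kbar, Polynomial.aeval lam (Matrix.charpoly A) = 0 → v lam < 0 := by
  classical
  intro lam hlam
  by_contra hge
  push_neg at hge
  set φ' := algebraMap (LaurentSeries ℂ) Kbar with hφ'
  set B := A.map φ' with hBdef
  have hBpow : ∀ k, B ^ k = (A ^ k).map φ' := by
    intro k
    have h := map_pow (φ'.mapMatrix) A k
    rw [RingHom.mapMatrix_apply, RingHom.mapMatrix_apply] at h
    exact h.symm
  have hchar : Matrix.charpoly B = (Matrix.charpoly A).map φ' := Matrix.charpoly_map A φ'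
  have heval : Polynomial.eval lam (Matrix.charpoly B) = 0 := by
    rw [hchar, Polynomial.eval_map]
    exact hlam
  have hdet : (Matrix.scalar (Fin n) lam - B).det = 0 := by
    rw [← heval, Matrix.charpoly, _root_.eval_det, Matrix.matPolyEquiv_charmatrix]
    simp
  obtain ⟨x, hx0, hxv⟩ := Matrix.exists_mulVec_eq_zero_iff.mpr hdet
  have hBx : B.mulVec x = lam • x := by
    have h0 : (Matrix.scalar (Fin n) lam).mulVec x - B.mulVec x = 0 := by
      rw [← Matrix.sub_mulVec]; exact hxv
    have hscal : (Matrix.scalar (Fin n) lam).mulVec x = lam • x := by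
      ext i
      rw [Matrix.scalar_apply, Matrix.mulVec_diagonal]
      simp
    rw [hscal] at h0
    exact (sub_eq_zero.mp h0).symm
  have hpow : ∀ k, (B ^ k).mulVec x = lam ^ k • x := by
    intro k
    induction k with
    | zero => simp [Matrix.one_mulVec]
    | succ k ih =>
      rw [pow_succ, ← Matrix.mulVec_mulVec, hBx, Matrix.mulVec_smul, ih, smul_smul, ← pow_succ']
  obtain ⟨j₀, hj₀⟩ := Function.ne_iff.mp hx0
  have hne : Nonempty (Fin n) := ⟨j₀⟩
  obtain ⟨i₀, -, hmax⟩ :=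
    Finset.exists_max_image Finset.univ (fun i => v (x i)) ⟨j₀, Finset.mem_univ _⟩
  have hmax' : ∀ j, v (x j) ≤ v (x i₀) := fun j => hmax j (Finset.mem_univ _)
  have hxi₀ : x i₀ ≠ 0 := by
    intro h
    have hb : v (x j₀) ≤ ⊥ := by rw [← (hv0 _).mpr h]; exact hmax' j₀
    exact hj₀ ((hv0 _).mp (le_bot_iff.mp hb))
  obtain ⟨q₀, hq₀⟩ : ∃ q₀ : ℚ, v (x i₀) = (q₀ : WithBot ℚ) := by
    cases hc : v (x i₀) with
    | bot => exact absurd ((hv0 _).mp hc) hxi₀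
    | coe q => exact ⟨q, rfl⟩
  obtain ⟨k₀, hk₀⟩ := h2 1
  have hVLS : ∀ j : Fin n, VLS ((A ^ k₀) i₀ j) 1 := fun j m hm => hk₀ k₀ le_rfl i₀ j m hm
  have hcoe : (((-1:ℤ):ℚ) : WithBot ℚ) + (q₀ : WithBot ℚ) = (((-1:ℚ) + q₀ : ℚ) : WithBot ℚ) := by
    norm_cast
  have hL : v (((B ^ k₀).mulVec x) i₀) ≤ (((-1:ℚ) + q₀ : ℚ) : WithBot ℚ) := by
    have hexp : ((B ^ k₀).mulVec x) i₀ = ∑ j, (B ^ k₀) i₀ j * x j := by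
      simp [Matrix.mulVec, dotProduct]
    rw [hexp]
    apply v_sum_le hv0 hvadd
    intro j _
    rw [hvmul]
    have h1 : v ((B ^ k₀) i₀ j) ≤ (((-1 : ℤ) : ℚ) : WithBot ℚ) := by
      rw [hBpow, Matrix.map_apply]
      exact v_phi_le hv0 hvext (hVLS j)
    exact le_trans (wb_add_le h1 ((hmax' j).trans_eq hq₀)) (le_of_eq hcoe)
  have hR : ((q₀ : ℚ) : WithBot ℚ) ≤ v (((B ^ k₀).mulVec x) i₀) := by
    rw [hpow k₀]
    have hr : (lam ^ k₀ • x) i₀ = lam ^ k₀ * x i₀ := rfl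
    rw [hr, hvmul, hq₀]
    calc ((q₀:ℚ) : WithBot ℚ) = 0 + ((q₀:ℚ) : WithBot ℚ) := by rw [zero_add]
    _ ≤ v (lam ^ k₀) + ((q₀:ℚ) : WithBot ℚ) :=
      wb_add_le (v_pow_nonneg hv0 hvmul hge k₀) (le_refl _)
  have hfin : (q₀ : ℚ) ≤ -1 + q₀ := by exact_mod_cast le_trans hR hL
  linarith

lemma step31 {n : ℕ} (A : Matrix (Fin n) (Fin n) (LaurentSeries ℂ))
    {v : Kbar → WithBot ℚ}
    (hv0 : ∀ x, v x = ⊥ ↔ x = 0)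
    (hvmul : ∀ x y, v (x * y) = v x + v y)
    (hvadd : ∀ x y, v (x + y) ≤ max (v x) (v y))
    (hvext : ∀ f : LaurentSeries ℂ, f ≠ 0 →
      v (algebraMap (LaurentSeries ℂ) Kbar f) = ((-(f.order) : ℚ) : WithBot ℚ))
    (h3 : ∀ lam : Kbar, Polynomial.aeval lam (Matrix.charpoly A) = 0 → v lam < 0) :
    ∀ i < n, ∀ m : ℤ, m ≤ 0 → ((Matrix.charpoly A).coeff i).coeff m = 0 := by
  classical
  intro i hi m hm
  set φ' := algebraMap (LaurentSeries ℂ) Kbar with hφ'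
  set c := (Matrix.charpoly A).coeff i with hc
  by_cases hc0 : c = 0
  · rw [hc0]; rfl
  set B := A.map φ' with hB
  have hchar : Matrix.charpoly B = (Matrix.charpoly A).map φ' := Matrix.charpoly_map A φ'
  have hmonic : (Matrix.charpoly B).Monic := Matrix.charpoly_monic B
  have hdeg : (Matrix.charpoly B).natDegree = n := by
    rw [Matrix.charpoly_natDegree_eq_dim, Fintype.card_fin]
  have hsplit : ((Matrix.charpoly B).roots).card = n := by
    have h := Polynomial.splits_iff_card_roots.mp
      (IsAlgClosed.splits (Matrix.charpoly B))
    rw [hdeg] at h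
    exact h
  have hroots : ∀ r ∈ (Matrix.charpoly B).roots, v r < 0 := by
    intro r hr
    apply h3
    have hx := Polynomial.isRoot_of_mem_roots hr
    rw [hchar, Polynomial.IsRoot, Polynomial.eval_map] at hx
    exact hx
  have hprod : Matrix.charpoly B
      = (((Matrix.charpoly B).roots).map (fun a => Polynomial.X - Polynomial.C a)).prod :=
    (IsAlgClosed.splits _).eq_prod_roots_of_monic hmonic
  have hcoeff : φ' c = (Matrix.charpoly B).coeff i := by
    rw [hchar, Polynomial.coeff_map]
  have hco : (Matrix.charpoly B).coeff i
      = (-1) ^ (n - i) * ((Matrix.charpoly B).roots).esymm (n - i) := by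
    conv_lhs => rw [hprod]
    rw [Multiset.prod_X_sub_C_coeff _ (by rw [hsplit]; omega), hsplit]
  have hvlt : v (φ' c) < 0 := by
    rw [hcoeff, hco, hvmul, v_negone_pow hv0 hvmul, zero_add, Multiset.esymm]
    apply v_msum_lt hv0 hvadd
    intro x hx
    rw [Multiset.mem_map] at hx
    obtain ⟨t, ht, rfl⟩ := hx
    rw [Multiset.mem_powersetCard] at ht
    obtain ⟨hts, htc⟩ := ht
    have htne : t ≠ 0 := by
      intro h
      rw [h] at htc
      simp at htc
      omega
    exact v_mprod_lt hv0 hvmul t htne fun r hr => hroots r (Multiset.mem_of_le hts hr)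
  rw [hvext c hc0] at hvlt
  have hord0 : (0:ℚ) < (c.order : ℚ) := by
    have hlt : (-(c.order):ℚ) < 0 := by exact_mod_cast hvlt
    linarith
  have hord : 0 < c.order := by exact_mod_cast hord0
  exact HahnSeries.coeff_eq_zero_of_lt_order (by omega)

end NSVaux


/-- for an `n×n` matrix `A` over `ℂ((1/z))` (modeled as the Laurent
series field in `T = 1/z`, so `val f = -f.order`), the following are equivalent:
(i) all non-leading coefficients of the characteristic polynomial of `A` lie in
`(1/z)ℂ[[1/z]]` (only `Tᵐ`, `m ≥ 1`, occurs);
(ii) `val (A^k) → -∞` as `k → ∞`;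
(iii) every eigenvalue of `A` in the algebraic closure has strictly negative
valuation, for a valuation `v` on the algebraic closure extending `val`. -/
theorem negative_spectral_valuation_tfae
    (n : ℕ) (A : Matrix (Fin n) (Fin n) (LaurentSeries ℂ))
    (v : AlgebraicClosure (LaurentSeries ℂ) → WithBot ℚ)
    (hv0 : ∀ x, v x = ⊥ ↔ x = 0)
    (hvmul : ∀ x y, v (x * y) = v x + v y)
    (hvadd : ∀ x y, v (x + y) ≤ max (v x) (v y))
    (hvext : ∀ f : LaurentSeries ℂ, f ≠ 0 →
      v (algebraMap (LaurentSeries ℂ) (AlgebraicClosure (LaurentSeries ℂ)) f)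
        = ((-(f.order) : ℚ) : WithBot ℚ)) :
    List.TFAE
      [ ∀ i < n, ∀ m : ℤ, m ≤ 0 → ((Matrix.charpoly A).coeff i).coeff m = 0,
        ∀ M : ℤ, ∃ k₀ : ℕ, ∀ k ≥ k₀, ∀ i j : Fin n, ∀ m : ℤ, m < M →
          ((A ^ k) i j).coeff m = 0,
        ∀ lam : AlgebraicClosure (LaurentSeries ℂ),
          Polynomial.aeval lam (Matrix.charpoly A) = 0 → v lam < 0 ] := by
  tfae_have 1 → 2 := fun h1 => NSVaux.step12 A h1
  tfae_have 2 → 3 := fun h2 => NSVaux.step23 A hv0 hvmul hvadd hvext h2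
  tfae_have 3 → 1 := fun h3 => NSVaux.step31 A hv0 hvmul hvadd hvext h3
  tfae_finish
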